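/- arXiv:2303.08930 — 3 statements merged into one kernel-verified Lean document; each statement's English description precedes it below -/
import Mathlib

section
/- If a hypergraph chain (𝓗_ℓ)_{ℓ∈ℤ} over a base set V has Helly Number h and Colorful Helly Number k ≥ h, then there exists a function β : (0,1) → [0,1) with lim_{α→1} β(α) = 1 such that for every ℓ ∈ ℤ, every finite set S ⊆ V and every α ∈ (0,1): if the number of h-element subsets of S belonging to 𝓗_ℓ is at least α·C(|S|,h), then there exists S' ⊆ S with |S'| ≥ β(α)·|S| and S' ∈ 𝓗_{ℓ+3}. -/
/-- A hypergraph (family of finite subsets of `V`) is downwards closed. -/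
def DownwardsClosed {V : Type*} (H : Set (Finset V)) : Prop :=
  ∀ ⦃A B : Finset V⦄, A ∈ H → B ⊆ A → B ∈ H

/-- A hypergraph chain: a `ℤ`-indexed sequence of downwards closed hypergraphs,
increasing in the index. -/
def HypergraphChain {V : Type*} (H : ℤ → Set (Finset V)) : Prop :=
  (∀ ℓ : ℤ, DownwardsClosed (H ℓ)) ∧ ∀ ℓ : ℤ, H ℓ ⊆ H (ℓ + 1)

/-- A hypergraph chain has Helly Number `h`: for every `ℓ` and every finite
`S ⊆ V`, if every `h`-element subset of `S` belongs to `H ℓ`, then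
`S ∈ H (ℓ + 1)`. -/
def HasHellyNumber {V : Type*} (H : ℤ → Set (Finset V)) (h : ℕ) : Prop :=
  ∀ ℓ : ℤ, ∀ S : Finset V, (∀ T ⊆ S, T.card = h → T ∈ H ℓ) → S ∈ H (ℓ + 1)

/-- A hypergraph chain has Colorful Helly Number `k`: for every `ℓ` and all
color classes `S 0, …, S (k-1)`, if every colorful selection (the image of a map
`φ : Fin k → V` with `φ i ∈ S i` for all `i`) is an edge of `H ℓ`, then some
color class is an edge of `H (ℓ + 1)`. -/
def HasColorfulHellyNumber {V : Type*} [DecidableEq V] (H : ℤ → Set (Finset V)) (k : ℕ) : Prop :=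
  ∀ ℓ : ℤ, ∀ S : Fin k → Finset V,
    (∀ φ : Fin k → V, (∀ i, φ i ∈ S i) → Finset.image φ Finset.univ ∈ H ℓ) →
    ∃ j : Fin k, S j ∈ H (ℓ + 1)

open Finset Filter Set

/-- Greedy extraction of a pairwise disjoint family of "bad" sets. -/
lemma exists_disjoint_family' {V : Type*} [DecidableEq V] (S : Finset V) (k t : ℕ)
    (P : Finset V → Prop)
    (ext : ∀ R : Finset V, R ⊆ S → S.card ≤ R.card + k * (t - 1) →
      ∃ B, B ⊆ R ∧ B.card ≤ k ∧ P B) :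
    ∃ Bs : Fin t → Finset V, (∀ i, Bs i ⊆ S) ∧ (∀ i, P (Bs i)) ∧
      (∀ i j, i ≠ j → Disjoint (Bs i) (Bs j)) := by
  suffices h : ∀ m, m ≤ t → ∃ Bs : Fin m → Finset V, (∀ i, Bs i ⊆ S) ∧ (∀ i, P (Bs i)) ∧
      (∀ i, (Bs i).card ≤ k) ∧ (∀ i j, i ≠ j → Disjoint (Bs i) (Bs j)) by
    obtain ⟨Bs, h1, h2, _, h4⟩ := h t le_rfl
    exact ⟨Bs, h1, h2, h4⟩
  intro m
  induction m with
  | zero =>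
    intro _
    exact ⟨fun i => i.elim0, fun i => i.elim0, fun i => i.elim0, fun i => i.elim0,
      fun i => i.elim0⟩
  | succ m ih =>
    intro hm
    obtain ⟨Bs, h1, h2, h3, h4⟩ := ih (le_trans (Nat.le_succ m) hm)
    set U : Finset V := Finset.univ.biUnion Bs with hU
    have hUcard : U.card ≤ k * m := by
      calc U.card ≤ ∑ i : Fin m, (Bs i).card := Finset.card_biUnion_le
        _ ≤ ∑ _i : Fin m, k := Finset.sum_le_sum fun i _ => h3 i
        _ = m * k := by simp [Finset.sum_const, Finset.card_univ]
        _ = k * m := Nat.mul_comm m k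
    have hsz : S.card ≤ (S \ U).card + k * (t - 1) := by
      have hle := Finset.le_card_sdiff U S
      have hm' : m ≤ t - 1 := by omega
      have hkm : k * m ≤ k * (t - 1) := Nat.mul_le_mul_left _ hm'
      omega
    obtain ⟨B, hBR, hBk, hBP⟩ := ext (S \ U) Finset.sdiff_subset hsz
    have hdisjB : ∀ j, Disjoint B (Bs j) := by
      intro j
      rw [Finset.disjoint_left]
      intro x hxB hxj
      have hxU : x ∈ U := Finset.mem_biUnion.mpr ⟨j, Finset.mem_univ _, hxj⟩
      exact (Finset.mem_sdiff.mp (hBR hxB)).2 hxU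
    refine ⟨Fin.snoc Bs B, ?_, ?_, ?_, ?_⟩
    · intro i
      induction i using Fin.lastCases with
      | last => simpa using le_trans hBR Finset.sdiff_subset
      | cast i => simpa using h1 i
    · intro i
      induction i using Fin.lastCases with
      | last => simpa using hBP
      | cast i => simpa using h2 i
    · intro i
      induction i using Fin.lastCases with
      | last => simpa using hBk
      | cast i => simpa using h3 i
    · intro i j hij
      induction i using Fin.lastCases with
      | last =>
        induction j using Fin.lastCases with
        | last => exact absurd rfl hij
        | cast j => simpa using hdisjB j
      | cast i =>
        induction j using Fin.lastCases with
        | last => simpa using (hdisjB i).symm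
        | cast j =>
          have hij' : i ≠ j := by
            intro e
            exact hij (by rw [e])
          simpa using h4 i j hij'

lemma arith1 (k c n g : ℝ) (hk : 1 ≤ k) (hc : c ≤ 2*n*g + 1)
    (hg : 0 ≤ g) (hn : 0 ≤ n) (hng : 1 ≤ n*g) :
    k * (k + c - 1) ≤ (k^2+3*k+1) * g * n := by
  nlinarith [mul_le_mul_of_nonneg_left hc (le_trans zero_le_one hk),
    mul_le_mul_of_nonneg_left hng (mul_nonneg (le_trans zero_le_one hk) (le_trans zero_le_one hk)),
    mul_nonneg (le_trans zero_le_one hk) (mul_nonneg hn hg), mul_nonneg hn hg]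

/-- **Stability of the Helly property for hypergraph chains.** If a hypergraph
chain has Helly Number `h` and Colorful Helly Number `k ≥ h`, then there is a
function `β : (0,1) → [0,1)` with `lim_{α → 1} β α = 1` such that for every
`ℓ ∈ ℤ`, every finite `S ⊆ V` and every `α ∈ (0,1)`: if at least
`α * C(|S|, h)` of the `h`-element subsets of `S` belong to `H ℓ`, then there
exists `S' ⊆ S` with `|S'| ≥ β α * |S|` and `S' ∈ H (ℓ + 3)`. -/
theorem stability_of_helly_for_chains {V : Type*} [DecidableEq V]
    (H : ℤ → Set (Finset V)) (h k : ℕ) (hhk : h ≤ k)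
    (hchain : HypergraphChain H) (hHelly : HasHellyNumber H h)
    (hCH : HasColorfulHellyNumber H k) :
    ∃ β : ℝ → ℝ, (∀ α ∈ Set.Ioo (0 : ℝ) 1, β α ∈ Set.Ico (0 : ℝ) 1) ∧
      Filter.Tendsto β (nhdsWithin 1 (Set.Ioo (0 : ℝ) 1)) (nhds 1) ∧
      ∀ ℓ : ℤ, ∀ S : Finset V, ∀ α ∈ Set.Ioo (0 : ℝ) 1,
        α * (S.card.choose h : ℝ) ≤
          (({T : Finset V | T ⊆ S ∧ T.card = h ∧ T ∈ H ℓ}).ncard : ℝ) →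
        ∃ S' : Finset V, S' ⊆ S ∧ β α * (S.card : ℝ) ≤ (S'.card : ℝ) ∧ S' ∈ H (ℓ + 3) := by
  classical
  obtain ⟨hdc, hmono⟩ := hchain
  -- monotonicity of the chain
  have hmono' : ∀ a b : ℤ, a ≤ b → H a ⊆ H b := by
    intro a b hab
    obtain ⟨c, rfl⟩ := Int.le.dest hab
    clear hab
    induction c with
    | zero => simp
    | succ m ih =>
      have e : a + ((m : ℤ) + 1) = (a + m) + 1 := by ring
      intro A hA
      have h1 : A ∈ H (a + m) := ih hA
      have h2 := hmono (a + m) h1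
      have : ((m.succ : ℕ) : ℤ) = (m : ℤ) + 1 := by push_cast; ring
      rw [this, e]
      exact h2
  -- exponent and constant
  set e : ℝ := (((max 1 k : ℕ) : ℝ))⁻¹ with he
  have hepos : 0 < e := by
    rw [he]
    have : (0:ℝ) < ((max 1 k : ℕ) : ℝ) := by
      exact_mod_cast Nat.lt_of_lt_of_le Nat.zero_lt_one (le_max_left 1 k)
    exact inv_pos.mpr this
  set K : ℝ := (k : ℝ) ^ 2 + 3 * k + 1 with hK
  have hKpos : 0 < K := by positivity
  set β : ℝ → ℝ := fun α => max 0 (1 - K * (1 - α) ^ e) with hβ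
  refine ⟨β, ?_, ?_, ?_⟩
  · -- range
    intro α hα
    constructor
    · exact le_max_left _ _
    · apply max_lt one_pos
      have h1 : (0:ℝ) < (1 - α) ^ e := Real.rpow_pos_of_pos (by linarith [hα.2]) e
      nlinarith
  · -- tendsto
    have h0 : Tendsto (fun α : ℝ => (1:ℝ) - α) (nhdsWithin 1 (Set.Ioo 0 1)) (nhds 0) := by
      have hcont : Tendsto (fun α : ℝ => (1:ℝ) - α) (nhds 1) (nhds 0) := by
        have hc : Continuous fun α : ℝ => (1:ℝ) - α := by continuity
        have := hc.tendsto (1:ℝ)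
        simpa using this
      exact hcont.mono_left nhdsWithin_le_nhds
    have h1 : Tendsto (fun x : ℝ => x ^ e) (nhds (0:ℝ)) (nhds ((0:ℝ) ^ e)) :=
      (Real.continuousAt_rpow_const 0 e (Or.inr hepos.le)).tendsto
    have h2 := h1.comp h0
    rw [Real.zero_rpow (ne_of_gt hepos)] at h2
    have h3 : Tendsto (fun α : ℝ => 1 - K * (1 - α) ^ e)
        (nhdsWithin 1 (Set.Ioo 0 1)) (nhds 1) := by
      have h4 := (h2.const_mul K).neg.const_add 1
      simpa [sub_eq_add_neg] using h4
    have h5 := (tendsto_const_nhds (x := (0:ℝ))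
        (f := nhdsWithin (1:ℝ) (Set.Ioo 0 1))).max h3
    rw [max_eq_right zero_le_one] at h5
    exact h5
  · -- the main statement
    intro ℓ S α hα hyp
    set n := S.card with hn
    -- convert ncard hypothesis to Finset cards
    set goodF : Finset (Finset V) := (S.powersetCard h).filter (· ∈ H ℓ) with hgoodF
    set badF : Finset (Finset V) := (S.powersetCard h).filter (· ∉ H ℓ) with hbadF
    have hset : {T : Finset V | T ⊆ S ∧ T.card = h ∧ T ∈ H ℓ} = ↑goodF := by
      ext T
      simp [hgoodF, Finset.mem_powersetCard, and_assoc]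
    rw [hset, Set.ncard_coe_finset] at hyp
    have hgb : goodF.card + badF.card = n.choose h := by
      rw [hgoodF, hbadF, Finset.card_filter_add_card_filter_not,
        Finset.card_powersetCard]
    have hβle1 : β α ≤ 1 := by
      apply max_le zero_le_one
      have : (0:ℝ) ≤ (1 - α) ^ e := Real.rpow_nonneg (by linarith [hα.2]) e
      nlinarith
    by_cases hall : ∀ T ⊆ S, T.card = h → T ∈ H ℓ
    · -- all h-subsets are good
      refine ⟨S, subset_rfl, ?_, ?_⟩
      · calc β α * (n:ℝ) ≤ 1 * n := by
              apply mul_le_mul_of_nonneg_right hβle1 (Nat.cast_nonneg n)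
          _ = n := by ring
      · exact hmono' (ℓ+1) (ℓ+3) (by omega) (hHelly ℓ S hall)
    push_neg at hall
    obtain ⟨T₀, hT₀S, hT₀card, hT₀bad⟩ := hall
    have hT₀mem : T₀ ∈ badF := by
      rw [hbadF, Finset.mem_filter, Finset.mem_powersetCard]
      exact ⟨⟨hT₀S, hT₀card⟩, hT₀bad⟩
    have hbad1 : 1 ≤ badF.card := Finset.card_pos.mpr ⟨T₀, hT₀mem⟩
    have hbadle : (badF.card : ℝ) ≤ (1 - α) * (n.choose h : ℝ) := by
      have hcast : (goodF.card : ℝ) + (badF.card : ℝ) = (n.choose h : ℝ) := by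
        exact_mod_cast congrArg (Nat.cast : ℕ → ℝ) hgb
      linarith
    have h1εC : (1:ℝ) ≤ (1 - α) * (n.choose h : ℝ) := by
      have : (1:ℝ) ≤ (badF.card : ℝ) := by exact_mod_cast hbad1
      linarith
    have hh1 : 1 ≤ h := by
      by_contra hh
      have : h = 0 := by omega
      rw [this, Nat.choose_zero_right] at h1εC
      push_cast at h1εC
      linarith [hα.1]
    have hk1 : 1 ≤ k := le_trans hh1 hhk
    have hk0 : k ≠ 0 := by omega
    have hhn : h ≤ n := by
      rw [← hT₀card]
      exact Finset.card_le_card hT₀S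
    have hn1 : 1 ≤ n := le_trans hh1 hhn
    have hmaxk : max 1 k = k := max_eq_right hk1
    have hee : e = ((k:ℝ))⁻¹ := by rw [he, hmaxk]
    -- the empty set is an edge
    have hempty : ∅ ∈ H ℓ := by
      have hCpos : (0:ℝ) < (n.choose h : ℝ) := by
        exact_mod_cast Nat.choose_pos hhn
      have hgoodpos : (0:ℝ) < (goodF.card : ℝ) :=
        lt_of_lt_of_le (by nlinarith [hα.1]) hyp
      have : 0 < goodF.card := by exact_mod_cast hgoodpos
      obtain ⟨Tg, hTg⟩ := Finset.card_pos.mp this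
      rw [hgoodF, Finset.mem_filter] at hTg
      exact hdc ℓ hTg.2 (Finset.empty_subset _)
    by_cases hβ0 : β α * (n:ℝ) ≤ 0
    · exact ⟨∅, Finset.empty_subset _, by simpa using hβ0,
        hmono' ℓ (ℓ+3) (by omega) hempty⟩
    push_neg at hβ0
    have hβpos : 0 < β α := by
      by_contra hc
      push_neg at hc
      have : β α * (n:ℝ) ≤ 0 := mul_nonpos_of_nonpos_of_nonneg hc (Nat.cast_nonneg n)
      linarith
    set ε : ℝ := 1 - α with hε
    have hε0 : 0 < ε := by rw [hε]; linarith [hα.2]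
    set γ₀ : ℝ := ε ^ e with hγ₀
    have hγ₀pos : 0 < γ₀ := Real.rpow_pos_of_pos hε0 e
    have hβval : β α = 1 - K * γ₀ := by
      rw [hβ]
      simp only
      apply max_eq_right
      rcases (lt_max_iff.mp hβpos) with h' | h'
      · exact absurd h' (lt_irrefl 0)
      · exact le_of_lt h'
    have hγ₀k : γ₀ ^ k = ε := by
      rw [hγ₀, hee]
      exact Real.rpow_inv_natCast_pow hε0.le hk0
    -- 1 ≤ n * γ₀
    have hCnk : ((n.choose h : ℕ) : ℝ) ≤ (n:ℝ) ^ k := by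
      calc ((n.choose h : ℕ) : ℝ) ≤ ((n ^ h : ℕ) : ℝ) := by
            exact_mod_cast Nat.choose_le_pow n h
        _ ≤ ((n ^ k : ℕ) : ℝ) := by
            exact_mod_cast Nat.pow_le_pow_right hn1 hhk
        _ = (n:ℝ) ^ k := by push_cast; ring
    have hεnk : 1 ≤ ε * (n:ℝ) ^ k := by
      calc (1:ℝ) ≤ ε * (n.choose h : ℝ) := h1εC
        _ ≤ ε * (n:ℝ) ^ k := by
            apply mul_le_mul_of_nonneg_left hCnk hε0.le
    have hnγ₀ : 1 ≤ (n:ℝ) * γ₀ := by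
      by_contra hlt
      push_neg at hlt
      have h0' : (0:ℝ) ≤ (n:ℝ) * γ₀ := by positivity
      have := pow_lt_one₀ h0' hlt hk0
      rw [mul_pow, hγ₀k] at this
      nlinarith
    -- failure assumption
    by_contra hfail
    push_neg at hfail
    -- parameters
    obtain ⟨c, hcge, hcle⟩ : ∃ c : ℕ, 2 * (n:ℝ) * γ₀ ≤ (c:ℝ) ∧ (c:ℝ) ≤ 2 * (n:ℝ) * γ₀ + 1 :=
      ⟨⌈2 * (n:ℝ) * γ₀⌉₊, Nat.le_ceil _, le_of_lt (Nat.ceil_lt_add_one (by positivity))⟩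
    set t : ℕ := k + c with ht
    have ht1 : 1 ≤ t := by omega
    have htcast : ((t - 1 : ℕ) : ℝ) = (k : ℝ) + c - 1 := by
      have h2 : 1 ≤ k + c := by omega
      rw [ht]
      push_cast [Nat.cast_sub h2]
      ring
    have hsize : ((k * (t - 1) : ℕ) : ℝ) ≤ K * γ₀ * n := by
      have hkR : (1:ℝ) ≤ (k:ℝ) := by exact_mod_cast hk1
      have hcast : ((k * (t - 1) : ℕ) : ℝ) = (k:ℝ) * ((k : ℝ) + c - 1) := by
        push_cast [htcast]
        ring
      rw [hcast, hK]
      exact arith1 _ _ _ _ hkR hcle hγ₀pos.le (Nat.cast_nonneg n) hnγ₀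
    -- extraction oracle
    have hpoint : ∀ R : Finset V, R ⊆ S → S.card ≤ R.card + k * (t - 1) →
        ∃ B, B ⊆ R ∧ B.card ≤ k ∧ B ∉ H (ℓ + 2) := by
      intro R hRS hRsz
      have hRreal : β α * (n:ℝ) ≤ (R.card : ℝ) := by
        have h1 : (n:ℝ) ≤ (R.card : ℝ) + ((k * (t-1) : ℕ) : ℝ) := by
          exact_mod_cast hRsz
        rw [hβval]
        have h2 := hsize
        have h3 : (1 - K * γ₀) * (n:ℝ) = (n:ℝ) - K * γ₀ * (n:ℝ) := by ring
        rw [h3]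
        linarith [h2, h1]
      by_contra hno
      push_neg at hno
      have hcol := hCH (ℓ + 2) (fun _ => R) ?_
      · obtain ⟨j, hj⟩ := hcol
        have e3 : ℓ + 2 + 1 = ℓ + 3 := by ring
        rw [e3] at hj
        exact hfail R hRS hRreal hj
      · intro φ hφ
        by_contra hbadim
        have himgR : Finset.image φ Finset.univ ⊆ R := by
          intro x hx
          obtain ⟨i, _, rfl⟩ := Finset.mem_image.mp hx
          exact hφ i
        have hck : (Finset.image φ Finset.univ).card ≤ k :=
          le_trans Finset.card_image_le (by simp)
        exact hbadim (hno _ himgR hck)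
    -- disjoint family of bad sets
    obtain ⟨Bs, hBsS, hBsbad, hBsdisj⟩ :=
      exists_disjoint_family' S k t (· ∉ H (ℓ + 2)) hpoint
    -- rainbow sets
    have hD : ∀ J : Finset (Fin t), J.card = k → ∃ D : Finset V,
        D ⊆ S ∧ D.card = k ∧ D ∉ H (ℓ + 1) ∧ (∀ j ∈ J, (D ∩ Bs j).Nonempty) ∧
        D ⊆ J.biUnion Bs := by
      intro J hJ
      set σ := J.orderIsoOfFin hJ with hσ
      have hstep : ¬ ∀ φ : Fin k → V, (∀ i, φ i ∈ Bs (σ i).1) →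
          Finset.image φ Finset.univ ∈ H (ℓ + 1) := by
        intro hφ
        obtain ⟨j, hj⟩ := hCH (ℓ + 1) (fun i => Bs (σ i).1) hφ
        have e3 : ℓ + 1 + 1 = ℓ + 2 := by ring
        rw [e3] at hj
        exact hBsbad _ hj
      push_neg at hstep
      obtain ⟨φ, hφmem, hφbad⟩ := hstep
      have hinj : Function.Injective φ := by
        intro i j hij
        by_contra hne
        have hσne : (σ i).1 ≠ (σ j).1 := by
          intro e'
          exact hne (σ.injective (Subtype.ext e'))
        have hd := hBsdisj _ _ hσne
        have hmem2 : φ i ∈ Bs (σ j).1 := by rw [hij]; exact hφmem j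
        exact (Finset.disjoint_left.mp hd) (hφmem i) hmem2
      refine ⟨Finset.image φ Finset.univ, ?_, ?_, hφbad, ?_, ?_⟩
      · intro x hx
        obtain ⟨i, _, rfl⟩ := Finset.mem_image.mp hx
        exact hBsS _ (hφmem i)
      · rw [Finset.card_image_of_injective _ hinj, Finset.card_univ, Fintype.card_fin]
      · intro j hj
        obtain ⟨i, hi⟩ := σ.surjective ⟨j, hj⟩
        have : φ i ∈ Bs j := by
          have := hφmem i
          rw [hi] at this
          exact this
        exact ⟨φ i, Finset.mem_inter.mpr
          ⟨Finset.mem_image_of_mem _ (Finset.mem_univ i), this⟩⟩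
      · intro x hx
        obtain ⟨i, _, rfl⟩ := Finset.mem_image.mp hx
        exact Finset.mem_biUnion.mpr ⟨(σ i).1, (σ i).2, hφmem i⟩
    -- bad h-subsets
    have hTe : ∀ D : Finset V, D ∉ H (ℓ + 1) → ∃ T, T ⊆ D ∧ T.card = h ∧ T ∉ H ℓ := by
      intro D hDbad
      by_contra hno
      push_neg at hno
      exact hDbad (hHelly ℓ D hno)
    choose D hDS hDcard hDbad hDmeet hDsub using hD
    choose T hTsub hTcard hTbad using hTe
    set s : Finset (Finset (Fin t)) := Finset.powersetCard k Finset.univ with hs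
    have hscard : s.card = t.choose k := by
      rw [hs, Finset.card_powersetCard, Finset.card_univ, Fintype.card_fin]
    set DD : Finset (Fin t) → Finset V :=
      fun J => if hJ : J.card = k then D J hJ else ∅ with hDD
    set f : Finset (Fin t) → Finset V :=
      fun J => if hJ : J.card = k then T (D J hJ) (hDbad J hJ) else ∅ with hf
    have hcardmem : ∀ J ∈ s, J.card = k := by
      intro J hJ
      exact (Finset.mem_powersetCard.mp hJ).2
    have hDDval : ∀ (J) (hJ : J.card = k), DD J = D J hJ := by
      intro J hJ
      rw [hDD]
      exact dif_pos hJ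
    have hfval : ∀ (J) (hJ : J.card = k), f J = T (D J hJ) (hDbad J hJ) := by
      intro J hJ
      rw [hf]
      exact dif_pos hJ
    have hmemchar : ∀ J ∈ s, ∀ j : Fin t, j ∈ J ↔ (DD J ∩ Bs j).Nonempty := by
      intro J hJs j
      have hJ := hcardmem J hJs
      rw [hDDval J hJ]
      constructor
      · intro hjJ
        exact hDmeet J hJ j hjJ
      · rintro ⟨x, hx⟩
        obtain ⟨hxD, hxB⟩ := Finset.mem_inter.mp hx
        obtain ⟨j', hj'J, hxB'⟩ := Finset.mem_biUnion.mp (hDsub J hJ hxD)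
        by_contra hjJ
        have hne : j' ≠ j := fun e' => hjJ (e' ▸ hj'J)
        exact (Finset.disjoint_left.mp (hBsdisj j' j hne)) hxB' hxB
    have himg : s.image f ⊆ badF := by
      intro a ha
      obtain ⟨J, hJs, rfl⟩ := Finset.mem_image.mp ha
      have hJ := hcardmem J hJs
      rw [hfval J hJ, hbadF, Finset.mem_filter, Finset.mem_powersetCard]
      exact ⟨⟨(hTsub _ _).trans (hDS J hJ), hTcard _ _⟩, hTbad _ _⟩
    have hfiber : ∀ a ∈ s.image f,
        (s.filter fun J => f J = a).card ≤ (n - h).choose (k - h) := by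
      intro a ha
      obtain ⟨J₀, hJ₀s, rfl⟩ := Finset.mem_image.mp ha
      have hJ₀ := hcardmem J₀ hJ₀s
      have hacard : (f J₀).card = h := by rw [hfval J₀ hJ₀]; exact hTcard _ _
      have haS : f J₀ ⊆ S := by
        rw [hfval J₀ hJ₀]
        exact (hTsub _ _).trans (hDS J₀ hJ₀)
      have hsubf : ∀ J ∈ s.filter (fun J => f J = f J₀), f J₀ ⊆ DD J := by
        intro J hJmem
        obtain ⟨hJs, hJeq⟩ := Finset.mem_filter.mp hJmem
        have hJ := hcardmem J hJs
        rw [← hJeq, hfval J hJ, hDDval J hJ]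
        exact hTsub _ _
      have hmain := Finset.card_le_card_of_injOn
        (s := s.filter fun J => f J = f J₀)
        (t := (S \ f J₀).powersetCard (k - h)) (fun J => DD J \ f J₀) ?_ ?_
      · calc (s.filter fun J => f J = f J₀).card
            ≤ ((S \ f J₀).powersetCard (k - h)).card := hmain
          _ = (S \ f J₀).card.choose (k - h) := Finset.card_powersetCard _ _
          _ = (n - h).choose (k - h) := by rw [Finset.card_sdiff_of_subset haS, hacard]
      · intro J hJmem
        have hJs := (Finset.mem_filter.mp hJmem).1
        have hJ := hcardmem J hJs
        simp only [Finset.mem_coe, Finset.mem_powersetCard]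
        constructor
        · apply Finset.sdiff_subset_sdiff _ subset_rfl
          rw [hDDval J hJ]
          exact hDS J hJ
        · rw [Finset.card_sdiff_of_subset (hsubf J hJmem), hacard, hDDval J hJ, hDcard J hJ]
      · intro J₁ hJ₁mem J₂ hJ₂mem heq
        simp only [Finset.coe_filter, Set.mem_setOf_eq] at hJ₁mem hJ₂mem
        have hJ₁s := hJ₁mem.1
        have hJ₂s := hJ₂mem.1
        have hDDeq : DD J₁ = DD J₂ := by
          have e1 := Finset.sdiff_union_of_subset (hsubf J₁ (Finset.mem_filter.mpr hJ₁mem))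
          have e2 := Finset.sdiff_union_of_subset (hsubf J₂ (Finset.mem_filter.mpr hJ₂mem))
          have heq' : DD J₁ \ f J₀ = DD J₂ \ f J₀ := heq
          rw [← e1, ← e2, heq']
        apply Finset.ext
        intro j
        rw [hmemchar J₁ hJ₁s j, hmemchar J₂ hJ₂s j, hDDeq]
    have hcount : t.choose k ≤ (n - h).choose (k - h) * badF.card := by
      calc t.choose k = s.card := hscard.symm
        _ ≤ (n - h).choose (k - h) * (s.image f).card :=
            Finset.card_le_mul_card_image s _ hfiber
        _ ≤ (n - h).choose (k - h) * badF.card :=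
            Nat.mul_le_mul_left _ (Finset.card_le_card himg)
    -- final arithmetic
    have hdesc1 : (c + 1) ^ k ≤ k.factorial * t.choose k := by
      have h1 : (t + 1 - k) ^ k ≤ t.descFactorial k := Nat.pow_sub_le_descFactorial t k
      rw [Nat.descFactorial_eq_factorial_mul_choose] at h1
      have h2 : t + 1 - k = c + 1 := by omega
      rwa [h2] at h1
    have hnat2 : k.factorial * ((n - h).choose (k - h)) * (n.choose h)
        ≤ k.choose h * n ^ k := by
      have e1 : k.factorial * ((n - h).choose (k - h)) * (n.choose h)
          = k.choose h * ((k - h).factorial * ((n - h).choose (k - h)))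
            * (h.factorial * (n.choose h)) := by
        rw [← Nat.choose_mul_factorial_mul_factorial hhk]
        ring
      have e2 : (k - h).factorial * ((n - h).choose (k - h)) ≤ n ^ (k - h) := by
        rw [← Nat.descFactorial_eq_factorial_mul_choose]
        exact le_trans (Nat.descFactorial_le_pow _ _)
          (Nat.pow_le_pow_left (Nat.sub_le n h) _)
      have e3 : h.factorial * (n.choose h) ≤ n ^ h := by
        rw [← Nat.descFactorial_eq_factorial_mul_choose]
        exact Nat.descFactorial_le_pow _ _
      calc k.factorial * ((n - h).choose (k - h)) * (n.choose h)
          = k.choose h * ((k - h).factorial * ((n - h).choose (k - h)))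
            * (h.factorial * (n.choose h)) := e1
        _ ≤ k.choose h * n ^ (k - h) * n ^ h := by
            exact Nat.mul_le_mul (Nat.mul_le_mul le_rfl e2) e3
        _ = k.choose h * n ^ k := by
            rw [mul_assoc, ← pow_add]
            congr 2
            omega
    have hkh2 : k.choose h ≤ 2 ^ k := by
      have h1 : k.choose h ≤ ∑ i ∈ Finset.range (k + 1), k.choose i :=
        Finset.single_le_sum (fun i _ => Nat.zero_le _)
          (Finset.mem_range.mpr (Nat.lt_succ_of_le hhk))
      rwa [Nat.sum_range_choose] at h1
    -- assemble in ℝ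
    have hfin1 : ((c:ℝ) + 1) ^ k ≤ (k.factorial : ℝ) * ((n - h).choose (k - h) : ℝ)
        * (badF.card : ℝ) := by
      have h1 : ((c + 1) ^ k : ℕ) ≤ (k.factorial * ((n - h).choose (k - h) * badF.card) : ℕ) :=
        le_trans hdesc1 (Nat.mul_le_mul_left _ hcount)
      calc ((c:ℝ) + 1) ^ k = (((c + 1) ^ k : ℕ) : ℝ) := by push_cast; ring
        _ ≤ ((k.factorial * ((n - h).choose (k - h) * badF.card) : ℕ) : ℝ) := by
            exact_mod_cast h1
        _ = (k.factorial : ℝ) * ((n - h).choose (k - h) : ℝ) * (badF.card : ℝ) := by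
            push_cast; ring
    have hfin2 : (k.factorial : ℝ) * ((n - h).choose (k - h) : ℝ) * (badF.card : ℝ)
        ≤ ε * ((k.choose h : ℝ) * (n:ℝ) ^ k) := by
      have h1 : (k.factorial : ℝ) * ((n - h).choose (k - h) : ℝ) * (badF.card : ℝ)
          ≤ (k.factorial : ℝ) * ((n - h).choose (k - h) : ℝ) * (ε * (n.choose h : ℝ)) := by
        apply mul_le_mul_of_nonneg_left hbadle (by positivity)
      have h2 : ((k.factorial * ((n - h).choose (k - h)) * (n.choose h) : ℕ) : ℝ)
          ≤ ((k.choose h * n ^ k : ℕ) : ℝ) := by exact_mod_cast hnat2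
      push_cast at h2
      calc (k.factorial : ℝ) * ((n - h).choose (k - h) : ℝ) * (badF.card : ℝ)
          ≤ (k.factorial : ℝ) * ((n - h).choose (k - h) : ℝ) * (ε * (n.choose h : ℝ)) := h1
        _ = ε * ((k.factorial : ℝ) * ((n - h).choose (k - h) : ℝ) * (n.choose h : ℝ)) := by
            ring
        _ ≤ ε * ((k.choose h : ℝ) * (n:ℝ) ^ k) := mul_le_mul_of_nonneg_left h2 hε0.le
    have hfin3 : ε * ((k.choose h : ℝ) * (n:ℝ) ^ k) ≤ (2 * (n:ℝ) * γ₀) ^ k := by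
      have h1 : ((k.choose h : ℕ) : ℝ) ≤ ((2 ^ k : ℕ) : ℝ) := by exact_mod_cast hkh2
      have h2 : (2 * (n:ℝ) * γ₀) ^ k = 2 ^ k * (n:ℝ) ^ k * ε := by
        rw [mul_pow, mul_pow, hγ₀k]
      push_cast at h1
      rw [h2]
      have h3 : (k.choose h : ℝ) * (n:ℝ) ^ k ≤ (2:ℝ) ^ k * (n:ℝ) ^ k :=
        mul_le_mul_of_nonneg_right h1 (pow_nonneg (Nat.cast_nonneg n) k)
      calc ε * ((k.choose h : ℝ) * (n:ℝ) ^ k) ≤ ε * ((2:ℝ) ^ k * (n:ℝ) ^ k) :=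
            mul_le_mul_of_nonneg_left h3 hε0.le
        _ = (2:ℝ) ^ k * (n:ℝ) ^ k * ε := by ring
    have hfin4 : (2 * (n:ℝ) * γ₀) ^ k < ((c:ℝ) + 1) ^ k := by
      apply pow_lt_pow_left₀ _
        (mul_nonneg (mul_nonneg (by norm_num) (Nat.cast_nonneg n)) hγ₀pos.le) hk0
      linarith [hcge]
    linarith
end

section
/- Let (𝓗_ℓ)_{ℓ∈ℤ} be a hypergraph chain over a base set V with Helly Number h and Colorful Helly Number k. Then for every ℓ ∈ ℤ and every finite subset S ⊆ V, the number of k-element subsets of S that do NOT belong to 𝓗_ℓ is at least C( (|S| − ω_k(𝓗_{ℓ+1}|_S))/k , k ). -/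
/-- `cliqueNum H m S` is `ω_m(H|_S)`: the size of the largest subset `K ⊆ S`
all of whose `m`-element subsets belong to `H`. -/
noncomputable def cliqueNum {V : Type*} (H : Set (Finset V)) (m : ℕ) (S : Finset V) : ℕ :=
  sSup {r : ℕ | ∃ K : Finset V, K ⊆ S ∧ K.card = r ∧ ∀ T ⊆ K, T.card = m → T ∈ H}

/-- The binomial coefficient `C(x, m)` for a real argument `x`: it is `0` when
`x < m`, and otherwise given by the usual falling-factorial expression. -/
noncomputable def realChoose (x : ℝ) (m : ℕ) : ℝ :=
  if x < m then 0 else (∏ j ∈ Finset.range m, (x - j)) / (m.factorial : ℝ)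

lemma realChoose_mono {m : ℕ} {x y : ℝ} (hxy : x ≤ y) :
    realChoose x m ≤ realChoose y m := by
  unfold realChoose
  split_ifs with hx hy hy
  · exact le_refl 0
  · apply div_nonneg _ (by positivity)
    apply Finset.prod_nonneg
    intro j hj
    have hj' : (j : ℝ) < m := by exact_mod_cast Finset.mem_range.mp hj
    have : (m : ℝ) ≤ y := not_lt.mp hy
    linarith
  · exact absurd (lt_of_le_of_lt hxy hy) hx
  · have hmx : (m : ℝ) ≤ x := not_lt.mp hx
    apply div_le_div_of_nonneg_right ?_ (by positivity)
    · apply Finset.prod_le_prod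
      · intro j hj
        have hj' : (j : ℝ) < m := by exact_mod_cast Finset.mem_range.mp hj
        linarith
      · intro j hj; linarith

lemma realChoose_natCast (t m : ℕ) : realChoose (t : ℝ) m = (t.choose m : ℝ) := by
  unfold realChoose
  split_ifs with hlt
  · have h : t < m := by exact_mod_cast hlt
    rw [Nat.choose_eq_zero_of_lt h, Nat.cast_zero]
  · have hmt : m ≤ t := by exact_mod_cast not_lt.mp hlt
    have hprod : (∏ j ∈ Finset.range m, ((t : ℝ) - j)) = (t.descFactorial m : ℝ) := by
      rw [Nat.descFactorial_eq_prod_range, Nat.cast_prod]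
      refine Finset.prod_congr rfl fun j hj => ?_
      have hj' : j ≤ t := le_trans (Nat.le_of_lt (Finset.mem_range.mp hj)) hmt
      rw [Nat.cast_sub hj']
    rw [hprod, Nat.descFactorial_eq_factorial_mul_choose, Nat.cast_mul,
      mul_div_cancel_left₀ _ (by exact_mod_cast m.factorial_ne_zero)]

/-- A maximal pairwise-disjoint family of `k`-element subsets of `S` missing from `Hs`. -/
lemma exists_disjoint_family {V : Type*} [DecidableEq V] (Hs : Set (Finset V)) (k : ℕ)
    (hk : 0 < k) (S : Finset V) :
    ∃ D : Finset (Finset V),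
      (∀ A ∈ D, A ⊆ S ∧ A.card = k ∧ A ∉ Hs) ∧
      ((D : Set (Finset V)).Pairwise fun A B => Disjoint A B) ∧
      ∀ T ⊆ S \ D.biUnion id, T.card = k → T ∈ Hs := by
  classical
  induction S using Finset.strongInductionOn with
  | _ S IH =>
    by_cases hex : ∃ T, T ⊆ S ∧ T.card = k ∧ T ∉ Hs
    · obtain ⟨T, hTS, hTk, hTH⟩ := hex
      have hTne : T.Nonempty := Finset.card_pos.mp (hTk ▸ hk)
      have hlt : S \ T ⊂ S := by
        apply Finset.sdiff_ssubset hTS hTne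
      obtain ⟨D', h1, h2, h3⟩ := IH (S \ T) hlt
      have hdisjT : ∀ A ∈ D', Disjoint T A := by
        intro A hA
        rw [Finset.disjoint_right]
        intro x hxA
        exact (Finset.mem_sdiff.mp ((h1 A hA).1 hxA)).2
      refine ⟨insert T D', ?_, ?_, ?_⟩
      · intro A hA
        rcases Finset.mem_insert.mp hA with rfl | hA
        · exact ⟨hTS, hTk, hTH⟩
        · obtain ⟨hsub, hc, hm⟩ := h1 A hA
          exact ⟨hsub.trans (Finset.sdiff_subset), hc, hm⟩
      · intro A hA B hB hne
        simp only [Finset.coe_insert, Set.mem_insert_iff, Finset.mem_coe] at hA hB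
        rcases hA with rfl | hA
        · rcases hB with rfl | hB
          · exact absurd rfl hne
          · exact hdisjT B hB
        · rcases hB with rfl | hB
          · exact (hdisjT A hA).symm
          · exact h2 hA hB hne
      · intro U hU hUk
        apply h3 U ?_ hUk
        intro x hx
        have hx' := hU hx
        simp only [Finset.mem_sdiff, Finset.mem_biUnion, id_eq, Finset.mem_insert,
          not_exists, not_and] at hx' ⊢
        obtain ⟨hxS, hxn⟩ := hx'
        constructor
        · exact ⟨hxS, hxn T (Or.inl rfl)⟩
        · intro A hA; exact hxn A (Or.inr hA)
    · push_neg at hex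
      refine ⟨∅, by simp, by simp, fun T hT hTk => hex T ?_ hTk⟩
      simpa using hT

/-- **Lemma (kim), part (a).** If the hypergraph chain `(H ℓ)` has Helly Number
`h` and Colorful Helly Number `k`, then for every `ℓ ∈ ℤ` and every finite
`S ⊆ V`, the number of `k`-element subsets of `S` not belonging to `H ℓ` is at
least `C((|S| - ω_k(H (ℓ+1)|_S)) / k, k)`. -/
theorem kim_lemma_part_a {V : Type*} [DecidableEq V]
    (H : ℤ → Set (Finset V)) (h k : ℕ)
    (hchain : HypergraphChain H) (hHelly : HasHellyNumber H h)
    (hCH : HasColorfulHellyNumber H k) :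
    ∀ ℓ : ℤ, ∀ S : Finset V,
      realChoose (((S.card : ℝ) - (cliqueNum (H (ℓ + 1)) k S : ℝ)) / k) k ≤
        (({T : Finset V | T ⊆ S ∧ T.card = k ∧ T ∉ H ℓ}).ncard : ℝ) := by
  classical
  intro ℓ S
  rcases Nat.eq_zero_or_pos k with rfl | hk
  · -- k = 0
    have hempty : (∅ : Finset V) ∉ H ℓ := by
      intro hmem
      obtain ⟨j, _⟩ := hCH ℓ (fun _ => (∅ : Finset V)) (fun φ _ => by simpa using hmem)
      exact j.elim0
    have hset : {T : Finset V | T ⊆ S ∧ T.card = 0 ∧ T ∉ H ℓ} = {∅} := by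
      ext T
      simp only [Set.mem_setOf_eq, Set.mem_singleton_iff, Finset.card_eq_zero]
      constructor
      · rintro ⟨_, rfl, _⟩; rfl
      · rintro rfl; exact ⟨Finset.empty_subset _, rfl, hempty⟩
    rw [hset, Set.ncard_singleton]
    norm_num [realChoose]
  · -- k ≥ 1
    obtain ⟨D, hD, hDpair, hDres⟩ := exists_disjoint_family (H (ℓ + 1)) k hk S
    set R := S \ D.biUnion id with hR
    set ω := cliqueNum (H (ℓ + 1)) k S with hω
    have hRclique : R.card ≤ ω := by
      apply le_csSup
      · refine ⟨S.card, ?_⟩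
        rintro r ⟨K, hKS, hKc, -⟩
        exact hKc ▸ Finset.card_le_card hKS
      · exact ⟨R, Finset.sdiff_subset, rfl, hDres⟩
    have hcardS : S.card ≤ ω + k * D.card := by
      have h1 : S ⊆ R ∪ D.biUnion id := by
        intro x hx
        rw [Finset.mem_union, hR, Finset.mem_sdiff]
        by_cases hxb : x ∈ D.biUnion id
        · exact Or.inr hxb
        · exact Or.inl ⟨hx, hxb⟩
      have h2 : (D.biUnion id).card ≤ ∑ A ∈ D, A.card := by
        simpa using (Finset.card_biUnion_le (s := D) (t := id))
      have h3 : ∑ A ∈ D, A.card = k * D.card := by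
        rw [Finset.sum_congr rfl (fun A hA => (hD A hA).2.1), Finset.sum_const,
          smul_eq_mul, mul_comm]
      calc S.card ≤ (R ∪ D.biUnion id).card := Finset.card_le_card h1
        _ ≤ R.card + (D.biUnion id).card := Finset.card_union_le _ _
        _ ≤ ω + k * D.card := add_le_add hRclique (h2.trans_eq h3)
    set BadF := S.powerset.filter (fun T => T.card = k ∧ T ∉ H ℓ) with hBadF
    have hsetEq : {T : Finset V | T ⊆ S ∧ T.card = k ∧ T ∉ H ℓ} = ↑BadF := by
      ext T
      simp [hBadF, Finset.mem_filter, Finset.mem_powerset, and_assoc]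
    have hEx : ∀ I ∈ D.powersetCard k,
        ∃ F, F ∈ BadF ∧ D.filter (fun A => (A ∩ F).Nonempty) = I := by
      intro I hI
      rw [Finset.mem_powersetCard] at hI
      obtain ⟨hIsub, hIk⟩ := hI
      set e : Fin k → Finset V :=
        fun i => ((I.equivFin.symm (Fin.cast hIk.symm i)) : Finset V) with he
      have he_mem : ∀ i, e i ∈ I := fun i => (I.equivFin.symm (Fin.cast hIk.symm i)).2
      have he_inj : Function.Injective e := by
        intro i i' hii'
        have h1 : I.equivFin.symm (Fin.cast hIk.symm i)
            = I.equivFin.symm (Fin.cast hIk.symm i') := Subtype.ext hii'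
        have h2 := I.equivFin.symm.injective h1
        exact Fin.cast_injective _ h2
      have he_surj : ∀ A ∈ I, ∃ i, e i = A := by
        intro A hA
        refine ⟨Fin.cast hIk (I.equivFin ⟨A, hA⟩), ?_⟩
        have hcast : Fin.cast hIk.symm (Fin.cast hIk (I.equivFin ⟨A, hA⟩))
            = I.equivFin ⟨A, hA⟩ := by ext; rfl
        rw [he]
        simp only [hcast, Equiv.symm_apply_apply]
      have hnot : ¬ ∀ φ : Fin k → V, (∀ i, φ i ∈ e i) →
          Finset.image φ Finset.univ ∈ H ℓ := by
        intro hall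
        obtain ⟨j, hj⟩ := hCH ℓ e hall
        exact (hD (e j) (hIsub (he_mem j))).2.2 hj
      push_neg at hnot
      obtain ⟨φ, hφmem, hφbad⟩ := hnot
      have hφinj : Function.Injective φ := by
        intro i i' hph
        by_contra hne
        have hei : e i ≠ e i' := fun hcon => hne (he_inj hcon)
        have hdisj := hDpair (Finset.mem_coe.mpr (hIsub (he_mem i)))
          (Finset.mem_coe.mpr (hIsub (he_mem i'))) hei
        exact Finset.disjoint_left.mp hdisj (hφmem i) (hph ▸ hφmem i')
      refine ⟨Finset.image φ Finset.univ, ?_, ?_⟩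
      · rw [hBadF, Finset.mem_filter, Finset.mem_powerset]
        refine ⟨?_, ?_, hφbad⟩
        · intro x hx
          obtain ⟨i, -, rfl⟩ := Finset.mem_image.mp hx
          exact (hD (e i) (hIsub (he_mem i))).1 (hφmem i)
        · rw [Finset.card_image_of_injective _ hφinj, Finset.card_univ, Fintype.card_fin]
      · ext A
        simp only [Finset.mem_filter]
        constructor
        · rintro ⟨hAD, x, hx⟩
          rw [Finset.mem_inter] at hx
          obtain ⟨hxA, hxF⟩ := hx
          obtain ⟨i, -, rfl⟩ := Finset.mem_image.mp hxF
          by_contra hAI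
          have hne : A ≠ e i := by rintro rfl; exact hAI (he_mem i)
          have hdisj := hDpair (Finset.mem_coe.mpr hAD)
            (Finset.mem_coe.mpr (hIsub (he_mem i))) hne
          exact Finset.disjoint_left.mp hdisj hxA (hφmem i)
        · intro hAI
          obtain ⟨i, rfl⟩ := he_surj A hAI
          exact ⟨hIsub hAI, ⟨φ i, Finset.mem_inter.mpr ⟨hφmem i,
            Finset.mem_image.mpr ⟨i, Finset.mem_univ i, rfl⟩⟩⟩⟩
    choose! f hf1 hf2 using hEx
    have hcards : (D.powersetCard k).card ≤ BadF.card := by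
      apply Finset.card_le_card_of_injOn f (fun I hI => hf1 I hI)
      intro I1 h1 I2 h2 heq
      rw [← hf2 I1 h1, ← hf2 I2 h2, heq]
    rw [hsetEq, Set.ncard_coe_finset]
    have hchoose : (D.card.choose k : ℝ) ≤ (BadF.card : ℝ) := by
      rw [← Finset.card_powersetCard]
      exact_mod_cast hcards
    refine le_trans ?_ hchoose
    rw [← realChoose_natCast]
    apply realChoose_mono
    rw [div_le_iff₀ (by exact_mod_cast hk : (0 : ℝ) < (k : ℝ))]
    have h4 : (S.card : ℝ) ≤ (ω : ℝ) + (k : ℝ) * (D.card : ℝ) := by exact_mod_cast hcardS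
    nlinarith [h4]
end

section
/- If 𝓒_1, …, 𝓒_{d+1} are finite families (color classes) of convex sets in ℝ^d such that for any colorful selection C_1 ∈ 𝓒_1, …, C_{d+1} ∈ 𝓒_{d+1} the intersection C_1 ∩ … ∩ C_{d+1} is nonempty, then for some index j with 1 ≤ j ≤ d+1, the intersection of all members of 𝓒_j is also nonempty. -/
section aux
variable {d : ℕ}

private lemma colorful_helly_Qconv (d : ℕ) (r : ℝ) :
    Convex ℝ {x : Fin d → ℝ | ∑ i, x i ^ 2 < r} := by
  intro x hx y hy a b ha hb hab
  have key : ∑ i, (a • x + b • y) i ^ 2 ≤ a * ∑ i, x i ^ 2 + b * ∑ i, y i ^ 2 := by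
    have h1 : ∀ i ∈ Finset.univ, (a • x + b • y) i ^ 2 ≤ a * x i ^ 2 + b * y i ^ 2 := by
      intro i _
      have h2 : (a • x + b • y) i = a * x i + b * y i := by simp
      rw [h2]
      nlinarith [mul_nonneg ha hb, sq_nonneg (x i - y i)]
    calc ∑ i, (a • x + b • y) i ^ 2 ≤ ∑ i, (a * x i ^ 2 + b * y i ^ 2) := Finset.sum_le_sum h1
      _ = a * ∑ i, x i ^ 2 + b * ∑ i, y i ^ 2 := by
          rw [Finset.sum_add_distrib, Finset.mul_sum, Finset.mul_sum]
  have hx' : ∑ i, x i ^ 2 < r := hx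
  have hy' : ∑ i, y i ^ 2 < r := hy
  show ∑ i, (a • x + b • y) i ^ 2 < r
  rcases eq_or_lt_of_le ha with h0 | hapos
  · have hb1 : b = 1 := by linarith
    calc _ ≤ a * ∑ i, x i ^ 2 + b * ∑ i, y i ^ 2 := key
      _ < r := by rw [← h0, hb1]; simpa using hy'
  · calc _ ≤ a * ∑ i, x i ^ 2 + b * ∑ i, y i ^ 2 := key
      _ < a * r + b * r := by
          apply add_lt_add_of_lt_of_le ((mul_lt_mul_iff_right₀ hapos).2 hx')
          exact mul_le_mul_of_nonneg_left hy'.le hb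
      _ = r := by rw [← add_mul, hab, one_mul]

private lemma colorful_helly_Qstrict (d : ℕ) (x y : Fin d → ℝ) (hxy : x ≠ y) (r : ℝ)
    (hx : ∑ i, x i ^ 2 = r) (hy : ∑ i, y i ^ 2 = r) :
    ∑ i, ((1/2 : ℝ) • x + (1/2 : ℝ) • y) i ^ 2 < r := by
  have hid : ∀ i ∈ Finset.univ, ((1/2:ℝ) • x + (1/2:ℝ) • y) i ^ 2
      = (x i ^ 2 + y i ^ 2) / 2 - ((x i - y i)/2) ^ 2 := by
    intro i _
    have h2 : ((1/2:ℝ) • x + (1/2:ℝ) • y) i = (x i + y i) / 2 := by simp; ring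
    rw [h2]; ring
  rw [Finset.sum_congr rfl hid, Finset.sum_sub_distrib]
  have hpos : 0 < ∑ i, ((x i - y i)/2) ^ 2 := by
    obtain ⟨j, hj⟩ := Function.ne_iff.mp hxy
    apply Finset.sum_pos' (fun i _ => sq_nonneg _) ⟨j, Finset.mem_univ j, ?_⟩
    have hne : (x j - y j)/2 ≠ 0 := by
      intro h; apply hj; field_simp at h; linarith
    positivity
  have hsum : ∑ i, (x i ^ 2 + y i ^ 2)/2 = r := by
    rw [show (fun i => (x i ^2 + y i ^2)/2) = fun i => x i ^2/2 + y i^2/2 from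
      funext fun i => by ring]
    rw [Finset.sum_add_distrib, ← Finset.sum_div, ← Finset.sum_div, hx, hy]; ring
  linarith

end aux


/-- **Colorful Helly Theorem (Lovász; Bárány).** If `𝓒_1, …, 𝓒_{d+1}` are
finite families (color classes) of convex sets in `ℝ^d` such that every
colorful selection `C_1 ∈ 𝓒_1, …, C_{d+1} ∈ 𝓒_{d+1}` has nonempty
intersection, then for some `j` the intersection of all members of `𝓒_j` is
nonempty. -/
theorem colorful_helly (d : ℕ)
    (𝓒 : Fin (d + 1) → Finset (Set (Fin d → ℝ)))
    (hconv : ∀ i, ∀ C ∈ 𝓒 i, Convex ℝ C)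
    (hsel : ∀ φ : Fin (d + 1) → Set (Fin d → ℝ), (∀ i, φ i ∈ 𝓒 i) →
      (⋂ i, φ i).Nonempty) :
    ∃ j : Fin (d + 1), (⋂ C ∈ 𝓒 j, C).Nonempty := by
  classical
  by_cases hne : ∀ j, (𝓒 j).Nonempty
  swap
  · push_neg at hne
    obtain ⟨j, hj⟩ := hne
    exact ⟨j, by simp [hj]⟩
  -- the quadratic form
  set Q : (Fin d → ℝ) → ℝ := fun x => ∑ i, x i ^ 2 with hQdef
  have hQcont : Continuous Q := by
    apply continuous_finset_sum
    exact fun i _ => (continuous_apply i).pow 2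
  -- the type of colorful selections
  have hΦfin : Finite (∀ i : Fin (d+1), {C // C ∈ 𝓒 i}) := by infer_instance
  have hΦne : Nonempty (∀ i : Fin (d+1), {C // C ∈ 𝓒 i}) :=
    ⟨fun i => ⟨(hne i).choose, (hne i).choose_spec⟩⟩
  -- witness points
  have hpex : ∀ φ : (∀ i : Fin (d+1), {C // C ∈ 𝓒 i}),
      ∃ x : Fin d → ℝ, ∀ i, x ∈ (φ i : Set (Fin d → ℝ)) := by
    intro φ
    obtain ⟨x, hx⟩ := hsel (fun i => φ i) (fun i => (φ i).2)
    exact ⟨x, fun i => Set.mem_iInter.mp hx i⟩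
  choose p hp using hpex
  -- polytope shrinking of each set
  set D : ∀ i : Fin (d+1), {C // C ∈ 𝓒 i} → Set (Fin d → ℝ) :=
    fun i C => convexHull ℝ (p '' {ψ | ψ i = C}) with hDdef
  have hDsub : ∀ i C, D i C ⊆ (C : Set (Fin d → ℝ)) := by
    intro i C
    apply convexHull_min ?_ (hconv i C C.2)
    rintro x ⟨ψ, hψ, rfl⟩
    have := hp ψ i
    rwa [hψ] at this
  have hDcompact : ∀ i C, IsCompact (D i C) :=
    fun i C => (Set.toFinite _).image p |>.isCompact_convexHull ℝ
  have hDconv : ∀ i C, Convex ℝ (D i C) := fun i C => convex_convexHull ℝ _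
  have hDmem : ∀ (φ : ∀ i : Fin (d+1), {C // C ∈ 𝓒 i}) i, p φ ∈ D i (φ i) :=
    fun φ i => subset_convexHull ℝ _ ⟨φ, rfl, rfl⟩
  -- intersections of shrunk selections
  set K : (∀ i : Fin (d+1), {C // C ∈ 𝓒 i}) → Set (Fin d → ℝ) :=
    fun φ => ⋂ i, D i (φ i) with hKdef
  have hKne : ∀ φ, (K φ).Nonempty := fun φ => ⟨p φ, Set.mem_iInter.mpr (hDmem φ)⟩
  have hKcl : ∀ φ, IsClosed (K φ) := fun φ => isClosed_iInter fun i => (hDcompact _ _).isClosed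
  have hKcp : ∀ φ, IsCompact (K φ) :=
    fun φ => (hDcompact 0 (φ 0)).of_isClosed_subset (hKcl φ) (Set.iInter_subset _ 0)
  -- min of Q on each K φ
  have hminex : ∀ φ, ∃ z ∈ K φ, ∀ x ∈ K φ, Q z ≤ Q x := by
    intro φ
    obtain ⟨z, hz, hzmin⟩ := (hKcp φ).exists_isMinOn (hKne φ) hQcont.continuousOn
    exact ⟨z, hz, fun x hx => hzmin hx⟩
  choose n hnK hnmin using hminex
  -- maximizing selection
  obtain ⟨φs, hφs⟩ := Finite.exists_max (fun φ => Q (n φ))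
  set z := n φs with hzdef
  set r := Q z with hrdef
  -- the Helly family
  set F : Option (Fin (d+1)) → Set (Fin d → ℝ) :=
    fun o => o.elim {x | Q x < r} (fun i => D i (φs i)) with hFdef
  have hFconv : ∀ o, Convex ℝ (F o) := by
    rintro (_ | i)
    · exact colorful_helly_Qconv d r
    · exact hDconv i (φs i)
  have hrank : Module.finrank ℝ (Fin d → ℝ) = d := by simp
  have hempty : ¬ (⋂ o ∈ (Finset.univ : Finset (Option (Fin (d+1)))), F o).Nonempty := by
    rintro ⟨x, hx⟩
    rw [Set.mem_iInter₂] at hx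
    have h1 : Q x < r := hx none (Finset.mem_univ _)
    have h2 : x ∈ K φs := Set.mem_iInter.mpr fun i => hx (some i) (Finset.mem_univ _)
    exact absurd (hnmin φs x h2) (by linarith)
  have hH : ¬ ∀ I ⊆ (Finset.univ : Finset (Option (Fin (d+1)))),
      I.card ≤ Module.finrank ℝ (Fin d → ℝ) + 1 → (⋂ o ∈ I, F o).Nonempty :=
    fun h => hempty (Convex.helly_theorem' (fun o _ => hFconv o) h)
  push_neg at hH
  obtain ⟨I, -, hIcard, hIempty⟩ := hH
  rw [hrank] at hIcard
  -- find a dropped color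
  have hi0 : ∃ i0 : Fin (d+1), some i0 ∉ I := by
    by_contra hall
    push_neg at hall
    by_cases hnone : none ∈ I
    · have huniv : (Finset.univ : Finset (Option (Fin (d+1)))) ⊆ I := by
        intro o _
        cases o with
        | none => exact hnone
        | some i => exact hall i
      have := Finset.card_le_card huniv
      rw [Finset.card_univ, Fintype.card_option, Fintype.card_fin] at this
      omega
    · have hm : z ∈ ⋂ o ∈ I, F o := by
        refine Set.mem_iInter₂.mpr fun o ho => ?_
        cases o with
        | none => exact absurd ho hnone
        | some i => exact Set.mem_iInter.mp (hnK φs) i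
      exact Set.notMem_empty _ (hIempty ▸ hm)
  obtain ⟨i0, hi0⟩ := hi0
  refine ⟨i0, z, Set.mem_iInter₂.mpr fun C hC => ?_⟩
  by_contra hzC
  -- the swapped selection
  set φ' := Function.update φs i0 ⟨C, hC⟩ with hφ'def
  have hφ'eq : ∀ i, i ≠ i0 → φ' i = φs i := fun i hi => Function.update_of_ne hi _ _
  set w := n φ' with hwdef
  have hwK : w ∈ K φ' := hnK φ'
  have hwD : ∀ i, i ≠ i0 → w ∈ D i (φs i) := by
    intro i hi
    have := Set.mem_iInter.mp hwK i
    rwa [hφ'eq i hi] at this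
  -- Q w ≥ r using emptiness of the dropped family
  have hwr : r ≤ Q w := by
    by_contra hlt
    push_neg at hlt
    have hm : w ∈ ⋂ o ∈ I, F o := by
      refine Set.mem_iInter₂.mpr fun o ho => ?_
      cases o with
      | none => exact hlt
      | some i =>
          have hii0 : i ≠ i0 := fun h => hi0 (h ▸ ho)
          exact hwD i hii0
    exact Set.notMem_empty _ (hIempty ▸ hm)
  have hwr' : Q w ≤ r := hφs φ'
  have hwreq : Q w = r := le_antisymm hwr' hwr
  -- strict convexity forces w = z
  have hwz : w = z := by
    by_contra hne'
    have hmid : Q ((1/2 : ℝ) • z + (1/2 : ℝ) • w) < r :=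
      colorful_helly_Qstrict d z w (fun h => hne' h.symm) r rfl hwreq
    have hm : (1/2 : ℝ) • z + (1/2 : ℝ) • w ∈ ⋂ o ∈ I, F o := by
      refine Set.mem_iInter₂.mpr fun o ho => ?_
      cases o with
      | none => exact hmid
      | some i =>
          have hii0 : i ≠ i0 := fun h => hi0 (h ▸ ho)
          have hzD : z ∈ D i (φs i) := Set.mem_iInter.mp (hnK φs) i
          exact (hDconv i (φs i)) hzD (hwD i hii0) (by norm_num) (by norm_num) (by norm_num)
    exact Set.notMem_empty _ (hIempty ▸ hm)
  -- hence z ∈ C, contradiction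
  apply hzC
  have : w ∈ D i0 (φ' i0) := Set.mem_iInter.mp hwK i0
  rw [hφ'def, Function.update_self] at this
  rw [← hwz]
  exact hDsub i0 ⟨C, hC⟩ this
end
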